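/- arXiv:1705.02760 — 3 statements merged into one kernel-verified Lean document; each statement's English description precedes it below -/
import Mathlib

section
/- Let M be a lattice (finitely generated free abelian group) and S ⊆ M a finitely generated subsemigroup with S - S = M. Let σ_S ⊆ M ⊗ ℝ be the cone generated by S, and let τ_1, ..., τ_q be the codimension-one faces of σ_S. Then the semigroup S' = ⋂_i (S - (S ∩ τ_i)) satisfies S ⊆ S' ⊆ M ∩ σ_S. -/
open scoped BigOperators

/-- The convex cone generated by a set `s` in a real vector space. -/
def coneOf {V : Type} [AddCommGroup V] [Module ℝ V] (s : Set V) : Set V :=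
  {x | ∃ (n : ℕ) (c : Fin n → ℝ) (v : Fin n → V),
    (∀ i, 0 ≤ c i) ∧ (∀ i, v i ∈ s) ∧ x = ∑ i, c i • v i}

/-- `τ` is a face of the cone `σ`. -/
def IsFaceOf {V : Type} [AddCommGroup V] [Module ℝ V] (τ σ : Set V) : Prop :=
  τ ⊆ σ ∧ (0 : V) ∈ τ ∧ (∀ x ∈ τ, ∀ y ∈ τ, x + y ∈ τ) ∧
    (∀ x ∈ τ, ∀ c : ℝ, 0 ≤ c → c • x ∈ τ) ∧
    ∀ x ∈ σ, ∀ y ∈ σ, x + y ∈ τ → x ∈ τ ∧ y ∈ τ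

/-- The dimension of the linear span of a set. -/
noncomputable def coneDim {V : Type} [AddCommGroup V] [Module ℝ V] (s : Set V) : ℕ :=
  Module.finrank ℝ (Submodule.span ℝ s)

/-- `τ` is a codimension-one face of the cone `σ`. -/
def IsCodimOneFace {V : Type} [AddCommGroup V] [Module ℝ V] (τ σ : Set V) : Prop :=
  IsFaceOf τ σ ∧ coneDim τ + 1 = coneDim σ

/-- `M` is a (full) lattice in the real vector space `V`. -/
def IsLattice {V : Type} [AddCommGroup V] [Module ℝ V] (M : AddSubgroup V) : Prop :=
  ∃ (n : ℕ) (b : Fin n → V), LinearIndependent ℝ b ∧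
    Submodule.span ℝ (Set.range b) = ⊤ ∧ M = AddSubgroup.closure (Set.range b)

/-- The group of differences `A - A` of a set `A`. -/
def latticeOf {V : Type} [AddCommGroup V] (A : Set V) : Set V :=
  {x | ∃ a ∈ A, ∃ b ∈ A, x = a - b}

/-- The group of differences `(A ∩ σ) - (A ∩ σ)`. -/
def diffSet {V : Type} [AddCommGroup V] (A σ : Set V) : Set V :=
  {x | ∃ a ∈ A ∩ σ, ∃ b ∈ A ∩ σ, x = a - b}

lemma my_farkas {V : Type} [AddCommGroup V] [Module ℝ V] :
    ∀ (k : ℕ) (g : Fin k → V) (m : V),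
      (∃ c : Fin k → ℝ, (∀ i, 0 ≤ c i) ∧ m = ∑ i, c i • g i) ∨
      ∃ u : V →ₗ[ℝ] ℝ, (∀ i, 0 ≤ u (g i)) ∧ u m < 0 := by
  intro k
  induction k with
  | zero =>
    intro g m
    by_cases hm : m = 0
    · exact Or.inl ⟨0, fun i => le_refl _, by simp [hm]⟩
    · right
      have := (Module.forall_dual_apply_eq_zero_iff ℝ m).not.2 hm
      push_neg at this
      obtain ⟨φ, hφ⟩ := this
      rcases lt_or_gt_of_ne hφ with h | h
      · exact ⟨φ, fun i => i.elim0, h⟩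
      · exact ⟨-φ, fun i => i.elim0, by simpa using h⟩
  | succ k IH =>
    intro g m
    set gk := g (Fin.last k) with hgk
    set g' : Fin k → V := fun i => g i.castSucc with hg'
    rcases IH g' m with ⟨c, hc, hm⟩ | ⟨u, hu, hum⟩
    · left
      refine ⟨Fin.snoc c 0, ?_, ?_⟩
      · intro i
        refine Fin.lastCases ?_ ?_ i <;> simp [Fin.snoc_castSucc, hc]
      · rw [Fin.sum_univ_castSucc]
        simp [Fin.snoc_castSucc, hm, hg']
    · by_cases hk : 0 ≤ u gk
      · right
        refine ⟨u, ?_, hum⟩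
        intro i
        refine Fin.lastCases ?_ ?_ i
        · exact hk
        · intro j; exact hu j
      · push_neg at hk
        have hne : u gk ≠ 0 := ne_of_lt hk
        set π : V →ₗ[ℝ] V := LinearMap.id - (u gk)⁻¹ • (LinearMap.smulRight u gk) with hπ
        have hπapp : ∀ x, π x = x - ((u x) / (u gk)) • gk := by
          intro x
          simp only [hπ, LinearMap.sub_apply, LinearMap.id_apply, LinearMap.smul_apply,
            LinearMap.smulRight_apply, div_eq_inv_mul, mul_smul]
        have hπker : ∀ x, u (π x) = 0 := by
          intro x
          rw [hπapp]
          simp [map_sub, map_smul, smul_eq_mul, div_mul_cancel₀ _ hne]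
        rcases IH (fun i => π (g' i)) (π m) with ⟨c, hc, hm⟩ | ⟨w, hw, hwm⟩
        · left
          set lam : ℝ := u m / u gk - ∑ i, c i * (u (g' i) / u gk) with hlam
          have hlam0 : 0 ≤ lam := by
            have h1 : 0 ≤ u m / u gk := le_of_lt (div_pos_of_neg_of_neg hum hk)
            have h2 : ∑ i, c i * (u (g' i) / u gk) ≤ 0 := by
              apply Finset.sum_nonpos
              intro i _
              apply mul_nonpos_of_nonneg_of_nonpos (hc i)
              exact div_nonpos_of_nonneg_of_nonpos (hu i) (le_of_lt hk)
            simp only [hlam]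
            linarith
          refine ⟨Fin.snoc c lam, ?_, ?_⟩
          · intro i
            refine Fin.lastCases ?_ ?_ i
            · simpa using hlam0
            · intro j; simpa using hc j
          · rw [Fin.sum_univ_castSucc]
            simp only [Fin.snoc_castSucc, Fin.snoc_last]
            have expand : ∑ i, c i • π (g' i)
                = (∑ i, c i • g' i) - (∑ i, c i * (u (g' i) / u gk)) • gk := by
              rw [Finset.sum_smul, ← Finset.sum_sub_distrib]
              refine Finset.sum_congr rfl (fun i _ => ?_)
              rw [hπapp, smul_sub, smul_smul]
            rw [hπapp, expand, sub_eq_iff_eq_add] at hm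
            have key : m = (∑ i, c i • g' i) + lam • gk := by
              rw [hlam, sub_smul]
              conv_lhs => rw [hm]
              abel
            simpa [hg', hgk] using key
        · right
          refine ⟨w ∘ₗ π, ?_, ?_⟩
          · intro i
            refine Fin.lastCases ?_ ?_ i
            · have : π gk = 0 := by
                rw [hπapp]; simp [div_self hne]
              simp [LinearMap.comp_apply, ← hgk, this]
            · intro j
              simpa [LinearMap.comp_apply] using hw j
          · simpa [LinearMap.comp_apply] using hwm

/-- Let `M` be a lattice and `S ⊆ M` a finitely generated subsemigroup with
`S - S = M`. Let `σS` be the cone generated by `S`. Then the semigroup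
`S' = ⋂_i (S - (S ∩ τ_i))`, the intersection over the codimension-one faces `τ_i` of `σS`
(taken inside `M`), satisfies `S ⊆ S' ⊆ M ∩ σS`. -/
theorem stmt_0 {V : Type} [AddCommGroup V] [Module ℝ V] [FiniteDimensional ℝ V]
    (M : AddSubgroup V) (hM : IsLattice M)
    (S : AddSubmonoid V) (hfg : S.FG)
    (hSM : ∀ m : V, m ∈ M ↔ ∃ s ∈ S, ∃ t ∈ S, m = s - t)
    (σS : Set V) (hσS : σS = coneOf (S : Set V))
    (S' : Set V)
    (hS' : S' = {m : V | m ∈ M ∧ ∀ τ : Set V, IsCodimOneFace τ σS →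
      ∃ s ∈ S, ∃ t ∈ (S : Set V) ∩ τ, m = s - t}) :
    (S : Set V) ⊆ S' ∧ S' ⊆ (M : Set V) ∩ σS := by
  -- generators
  obtain ⟨F, hF⟩ := hfg
  set k := F.card with hk
  set g : Fin k → V := fun i => (F.equivFin.symm i : V) with hg
  have hgF : Set.range g = (F : Set V) := by
    ext x
    constructor
    · rintro ⟨i, rfl⟩; exact (F.equivFin.symm i).2
    · intro hx; exact ⟨F.equivFin ⟨x, hx⟩, by simp [hg]⟩
  have hgS : ∀ i, g i ∈ S := by
    intro i
    have : g i ∈ (F : Set V) := hgF ▸ ⟨i, rfl⟩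
    exact hF ▸ AddSubmonoid.subset_closure this
  -- the cone as nonneg combinations of the generators
  set Cmon : AddSubmonoid V :=
    { carrier := {x | ∃ c : Fin k → ℝ, (∀ i, 0 ≤ c i) ∧ x = ∑ i, c i • g i}
      zero_mem' := ⟨0, fun i => le_refl _, by simp⟩
      add_mem' := by
        rintro x y ⟨c, hc, rfl⟩ ⟨d, hd, rfl⟩
        exact ⟨c + d, fun i => add_nonneg (hc i) (hd i), by
          simp [add_smul, Finset.sum_add_distrib]⟩ } with hCmon
  set C : Set V := (Cmon : Set V) with hCdef
  have hCsmul : ∀ (a : ℝ), 0 ≤ a → ∀ x ∈ C, a • x ∈ C := by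
    rintro a ha x ⟨c, hc, rfl⟩
    exact ⟨a • c, fun i => mul_nonneg ha (hc i), by
      simp [Finset.smul_sum, smul_smul]⟩
  have hSC : (S : Set V) ⊆ C := by
    rw [← hF]
    intro x hx
    refine AddSubmonoid.closure_le.2 ?_ hx
    intro y hy
    obtain ⟨i, rfl⟩ : ∃ i, g i = y := by
      have : y ∈ Set.range g := hgF ▸ hy
      exact this
    exact ⟨Pi.single i 1, fun j => by
      by_cases h : j = i <;> simp [Pi.single_apply, h], by
      simp [Pi.single_apply, ite_smul]⟩
  have hCcone : σS = C := by
    rw [hσS]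
    apply Set.Subset.antisymm
    · rintro x ⟨n, c, v, hc, hv, rfl⟩
      exact AddSubmonoid.sum_mem Cmon
        (fun i _ => hCsmul (c i) (hc i) (v i) (hSC (hv i)))
    · rintro x ⟨c, hc, rfl⟩
      exact ⟨k, c, g, hc, fun i => hgS i, rfl⟩
  have hSσ : (S : Set V) ⊆ σS := by
    intro s hs
    rw [hσS]
    exact ⟨1, fun _ => 1, fun _ => s, fun _ => zero_le_one, fun _ => hs, by simp⟩
  -- nonnegativity of dual vectors on the cone
  have huσ : ∀ (u : V →ₗ[ℝ] ℝ), (∀ i, 0 ≤ u (g i)) → ∀ x ∈ σS, 0 ≤ u x := by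
    intro u hu x hx
    rw [hCcone] at hx
    obtain ⟨c, hc, rfl⟩ := hx
    rw [map_sum]
    exact Finset.sum_nonneg fun i _ => by
      rw [map_smul, smul_eq_mul]; exact mul_nonneg (hc i) (hu i)
  -- span facts
  set N := Module.finrank ℝ V with hN
  have hspan : Submodule.span ℝ (Set.range g) = ⊤ := by
    obtain ⟨n, b, hbli, hbspan, hMb⟩ := hM
    have hCspan : C ⊆ (Submodule.span ℝ (Set.range g) : Set V) := by
      rintro x ⟨c, hc, rfl⟩
      exact Submodule.sum_mem _ fun i _ =>
        Submodule.smul_mem _ _ (Submodule.subset_span ⟨i, rfl⟩)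
    have hMspan : (M : Set V) ⊆ (Submodule.span ℝ (Set.range g) : Set V) := by
      intro x hx
      obtain ⟨s, hs, t, ht, rfl⟩ := (hSM x).1 hx
      exact sub_mem (hCspan (hSC hs)) (hCspan (hSC ht))
    have : Set.range b ⊆ (Submodule.span ℝ (Set.range g) : Set V) := by
      intro x hx
      exact hMspan (hMb ▸ AddSubgroup.subset_closure hx)
    have := Submodule.span_le.2 this
    rw [hbspan] at this
    exact top_le_iff.1 this
  have hσdim : coneDim σS = N := by
    have h1 : Submodule.span ℝ σS = ⊤ := by
      rw [← top_le_iff, ← hspan]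
      apply Submodule.span_mono
      rintro x ⟨i, rfl⟩
      exact hSσ (hgS i)
    rw [coneDim, h1, finrank_top]
  constructor
  · -- S ⊆ S'
    intro s hs
    rw [hS']
    refine ⟨(hSM s).2 ⟨s, hs, 0, S.zero_mem, by simp⟩, ?_⟩
    intro τ hτ
    exact ⟨s, hs, 0, ⟨S.zero_mem, hτ.1.2.1⟩, by simp⟩
  · -- S' ⊆ M ∩ σS
    intro m hm
    rw [hS'] at hm
    obtain ⟨hmM, hτall⟩ := hm
    refine ⟨hmM, ?_⟩
    by_contra hmσ
    have hmC : ¬ ∃ c : Fin k → ℝ, (∀ i, 0 ≤ c i) ∧ m = ∑ i, c i • g i := by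
      intro h
      exact hmσ (hCcone ▸ h)
    obtain ⟨u0, hu0, hu0m⟩ := (my_farkas k g m).resolve_left hmC
    -- maximize the dimension of the zero set
    set P : (V →ₗ[ℝ] ℝ) → Prop := fun u => (∀ i, 0 ≤ u (g i)) ∧ u m < 0 with hP
    set Z : (V →ₗ[ℝ] ℝ) → Set V := fun u => {x | x ∈ Set.range g ∧ u x = 0} with hZ
    set D : (V →ₗ[ℝ] ℝ) → ℕ := fun u => Module.finrank ℝ (Submodule.span ℝ (Z u)) with hD
    set A : Set ℕ := {d | ∃ u, P u ∧ D u = d} with hA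
    have hAne : A.Nonempty := ⟨D u0, u0, ⟨hu0, hu0m⟩, rfl⟩
    have hAbdd : BddAbove A := by
      refine ⟨N, ?_⟩
      rintro d ⟨u, _, rfl⟩
      exact Submodule.finrank_le _
    obtain ⟨u, huP, huD⟩ : ∃ u, P u ∧ D u = sSup A := Nat.sSup_mem hAne hAbdd
    have hmax : ∀ u', P u' → D u' ≤ D u := by
      intro u' hu'
      rw [huD]
      exact le_csSup hAbdd ⟨u', hu', rfl⟩
    obtain ⟨hu, hum⟩ := huP
    -- the candidate facet
    set τ : Set V := {x | x ∈ σS ∧ u x = 0} with hτdef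
    have hZτ : Z u ⊆ τ := by
      rintro x ⟨⟨i, rfl⟩, hx0⟩
      exact ⟨hSσ (hgS i), hx0⟩
    have hτker : Submodule.span ℝ τ ≤ LinearMap.ker u := by
      rw [Submodule.span_le]
      rintro x ⟨_, hx0⟩
      exact hx0
    have hm0 : m ≠ 0 := by
      intro h
      rw [h, map_zero] at hum
      exact lt_irrefl 0 hum
    have : Nontrivial V := ⟨m, 0, hm0⟩
    have hN1 : 1 ≤ N := Module.finrank_pos
    -- dimension of the kernel
    have hker : Module.finrank ℝ (LinearMap.ker u) + 1 = N := by
      have hrange : LinearMap.range u = ⊤ := by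
        rw [LinearMap.range_eq_top]
        intro r
        refine ⟨(r / u m) • m, ?_⟩
        rw [map_smul, smul_eq_mul, div_mul_cancel₀ _ (ne_of_lt hum)]
      have := LinearMap.finrank_range_add_finrank_ker u
      rw [hrange, finrank_top, Module.finrank_self] at this
      omega
    -- maximality gives N ≤ D u + 1
    have hDle : N ≤ D u + 1 := by
      by_contra hcon
      push_neg at hcon
      set W : Submodule ℝ V := Submodule.span ℝ (Z u) ⊔ Submodule.span ℝ {m} with hW
      have hWrank : Module.finrank ℝ W < N := by
        have h1 := Submodule.finrank_sup_add_finrank_inf_eq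
          (Submodule.span ℝ (Z u)) (Submodule.span ℝ {m})
        rw [← hW] at h1
        have h2 : Module.finrank ℝ (Submodule.span ℝ ({m} : Set V)) = 1 :=
          finrank_span_singleton hm0
        have hDu : D u = Module.finrank ℝ (Submodule.span ℝ (Z u)) := rfl
        omega
      have hWlt : W < ⊤ := by
        rcases lt_or_eq_of_le (le_top : W ≤ ⊤) with h | h
        · exact h
        · rw [h] at hWrank
          rw [finrank_top] at hWrank
          omega
      obtain ⟨v0, hv0ne, hv0map⟩ :=
        Submodule.exists_dual_map_eq_bot_of_lt_top hWlt inferInstance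
      have hv0W : ∀ x ∈ W, v0 x = 0 := by
        intro x hx
        have h := Submodule.mem_map_of_mem (f := v0) hx
        rw [hv0map, Submodule.mem_bot] at h
        exact h
      have hmW : m ∈ W :=
        (le_sup_right : Submodule.span ℝ ({m} : Set V) ≤ W)
          (Submodule.mem_span_singleton_self m)
      have hZW : ∀ x ∈ Z u, x ∈ W := fun x hx =>
        (le_sup_left : Submodule.span ℝ (Z u) ≤ W) (Submodule.subset_span hx)
      -- find a generator where v0 doesn't vanish
      obtain ⟨i0, hi0⟩ : ∃ i, v0 (g i) ≠ 0 := by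
        by_contra hcon2
        push_neg at hcon2
        have : Submodule.span ℝ (Set.range g) ≤ LinearMap.ker v0 := by
          rw [Submodule.span_le]
          rintro x ⟨i, rfl⟩
          exact hcon2 i
        rw [hspan, top_le_iff] at this
        exact hv0ne (LinearMap.ker_eq_top.1 this)
      -- fix the sign
      obtain ⟨v, hvW, hvneg⟩ : ∃ v : V →ₗ[ℝ] ℝ,
          (∀ x ∈ W, v x = 0) ∧ v (g i0) < 0 := by
        rcases lt_or_gt_of_ne hi0 with h | h
        · exact ⟨v0, hv0W, h⟩
        · exact ⟨-v0, fun x hx => by simp [hv0W x hx], by simpa using h⟩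
      set T : Finset (Fin k) := Finset.univ.filter (fun i => v (g i) < 0) with hT
      have hTne : T.Nonempty := ⟨i0, by simp [hT, hvneg]⟩
      have huT : ∀ i ∈ T, 0 < u (g i) := by
        intro i hi
        rcases lt_or_eq_of_le (hu i) with h | h
        · exact h
        · exfalso
          have hgZ : g i ∈ Z u := ⟨⟨i, rfl⟩, h.symm⟩
          have := hvW (g i) (hZW _ hgZ)
          rw [hT] at hi
          simp only [Finset.mem_filter] at hi
          linarith [hi.2]
      set f : Fin k → ℝ := fun i => u (g i) / (-(v (g i))) with hf
      set t0 : ℝ := T.inf' hTne f with ht0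
      have ht0pos : 0 < t0 := by
        rw [ht0, Finset.lt_inf'_iff]
        intro i hi
        have h1 : 0 < u (g i) := huT i hi
        have h2 : 0 < -(v (g i)) := by
          rw [hT] at hi
          simp only [Finset.mem_filter] at hi
          linarith [hi.2]
        exact div_pos h1 h2
      obtain ⟨imin, himinT, himin⟩ := Finset.exists_mem_eq_inf' hTne f
      set u' : V →ₗ[ℝ] ℝ := u + t0 • v with hu'
      have hu'app : ∀ x, u' x = u x + t0 * v x := fun x => rfl
      have hu'P : P u' := by
        constructor
        · intro i
          rw [hu'app]
          by_cases hi : v (g i) < 0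
          · have hiT : i ∈ T := by simp [hT, hi]
            have hle : t0 ≤ f i := Finset.inf'_le f hiT
            have h2 : 0 < -(v (g i)) := by linarith
            rw [hf] at hle
            rw [le_div_iff₀ h2] at hle
            linarith
          · push_neg at hi
            have := mul_nonneg (le_of_lt ht0pos) hi
            linarith [hu i]
        · rw [hu'app, hvW m hmW]
          simpa using hum
      have hZsub : Z u ⊆ Z u' := by
        rintro x ⟨hxr, hx0⟩
        refine ⟨hxr, ?_⟩
        rw [hu'app, hx0, hvW x (hZW x ⟨hxr, hx0⟩)]
        ring
      have hgmin : g imin ∈ Z u' := by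
        refine ⟨⟨imin, rfl⟩, ?_⟩
        rw [hu'app]
        have h2 : -(v (g imin)) ≠ 0 := by
          have := huT imin himinT
          rw [hT] at himinT
          simp only [Finset.mem_filter] at himinT
          linarith [himinT.2]
        rw [ht0, himin, hf]
        field_simp
        have h3 : v (g imin) ≠ 0 := fun h => h2 (by rw [h, neg_zero])
        rw [div_self h3]; ring
      have hgmin_not : g imin ∉ Submodule.span ℝ (Z u) := by
        intro hmem
        have : g imin ∈ W := (le_sup_left : Submodule.span ℝ (Z u) ≤ W) hmem
        have := hvW _ this
        rw [hT] at himinT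
        simp only [Finset.mem_filter] at himinT
        linarith [himinT.2]
      have hlt : Submodule.span ℝ (Z u) < Submodule.span ℝ (Z u') := by
        refine lt_of_le_of_ne (Submodule.span_mono hZsub) ?_
        intro h
        exact hgmin_not (h ▸ Submodule.subset_span hgmin)
      have hDlt : D u < D u' := Submodule.finrank_lt_finrank_of_lt hlt
      exact absurd (hmax u' hu'P) (not_le.2 hDlt)
    -- τ is a codimension-one face
    have hface : IsCodimOneFace τ σS := by
      constructor
      · refine ⟨fun x hx => hx.1, ⟨?_, map_zero u⟩, ?_, ?_, ?_⟩
        · rw [hCcone]; exact Cmon.zero_mem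
        · rintro x ⟨hxσ, hx0⟩ y ⟨hyσ, hy0⟩
          refine ⟨?_, by rw [map_add, hx0, hy0, add_zero]⟩
          rw [hCcone] at *
          exact Cmon.add_mem hxσ hyσ
        · rintro x ⟨hxσ, hx0⟩ c hc
          refine ⟨?_, by rw [map_smul, hx0, smul_zero]⟩
          rw [hCcone] at *
          exact hCsmul c hc x hxσ
        · intro x hx y hy hxy
          have hx0 := huσ u hu x hx
          have hy0 := huσ u hu y hy
          have : u x + u y = 0 := by
            have := hxy.2
            rw [map_add] at this
            exact this
          exact ⟨⟨hx, by linarith⟩, ⟨hy, by linarith⟩⟩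
      · rw [hσdim]
        have h1 : D u ≤ Module.finrank ℝ (Submodule.span ℝ τ) :=
          Submodule.finrank_mono (Submodule.span_mono hZτ)
        have h2 : Module.finrank ℝ (Submodule.span ℝ τ) ≤
            Module.finrank ℝ (LinearMap.ker u) :=
          Submodule.finrank_mono hτker
        rw [coneDim]
        omega
    obtain ⟨s, hs, t, ⟨htS, htτ⟩, hmst⟩ := hτall τ hface
    have h1 : 0 ≤ u s := huσ u hu s (hSσ hs)
    have h2 : u t = 0 := htτ.2
    rw [hmst, map_sub, h2, sub_zero] at hum
    linarith
end

section
/- Let S ⊆ M be a finitely generated subsemigroup with S - S = M such that Spec k[S] is seminormal. The conductor ideal I = ⊕_{m : m + S̄ ⊆ S} k·χ^m of the normalization k[S] ⊆ k[S̄] (where S̄ = M ∩ σ_S) is a radical ideal; more precisely, {m ∈ S : m + S̄ ⊆ S} = S \ ⋃_{σ ∈ Δ'} σ, where Δ' is the set of faces σ of σ_S with (S ∩ σ) - (S ∩ σ) strictly contained in (M ∩ σ) ∩ σ - (M ∩ σ) ∩ σ. -/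
open scoped BigOperators

section Aux

variable {V : Type} [AddCommGroup V] [Module ℝ V]

lemma coneOf_zero_mem (s : Set V) : (0 : V) ∈ coneOf s :=
  ⟨0, fun i => i.elim0, fun i => i.elim0, fun i => i.elim0, fun i => i.elim0, by simp⟩

lemma subset_coneOf (s : Set V) : s ⊆ coneOf s := by
  intro a ha
  exact ⟨1, fun _ => 1, fun _ => a, fun _ => zero_le_one, fun _ => ha, by simp⟩

lemma coneOf_add_mem {s : Set V} {x y : V} (hx : x ∈ coneOf s) (hy : y ∈ coneOf s) :
    x + y ∈ coneOf s := by
  obtain ⟨n, c, v, hc, hv, hx⟩ := hx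
  obtain ⟨m, c', v', hc', hv', hy⟩ := hy
  refine ⟨n + m, Fin.append c c', Fin.append v v', ?_, ?_, ?_⟩
  · intro i
    refine Fin.addCases (fun j => ?_) (fun j => ?_) i
    · simpa [Fin.append_left] using hc j
    · simpa [Fin.append_right] using hc' j
  · intro i
    refine Fin.addCases (fun j => ?_) (fun j => ?_) i
    · simpa [Fin.append_left] using hv j
    · simpa [Fin.append_right] using hv' j
  · rw [Fin.sum_univ_add]
    simp [Fin.append_left, Fin.append_right, hx, hy]

lemma coneOf_smul_mem {s : Set V} {x : V} (hx : x ∈ coneOf s) {t : ℝ} (ht : 0 ≤ t) :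
    t • x ∈ coneOf s := by
  obtain ⟨n, c, v, hc, hv, hx⟩ := hx
  refine ⟨n, fun i => t * c i, v, fun i => mul_nonneg ht (hc i), hv, ?_⟩
  rw [hx, Finset.smul_sum]
  exact Finset.sum_congr rfl fun i _ => smul_smul t (c i) (v i)

end Aux

set_option maxHeartbeats 1000000 in
set_option synthInstance.maxHeartbeats 200000 in
/-- The key geometric fact: a point `x` of a cone `σ` lies in the intrinsic (relative)
interior of the face it generates. -/
lemma mem_intrinsicInterior_genFace {V : Type} [NormedAddCommGroup V] [NormedSpace ℝ V]
    [FiniteDimensional ℝ V] (σ : Set V)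
    (hadd : ∀ a ∈ σ, ∀ b ∈ σ, a + b ∈ σ)
    (hsmul : ∀ a ∈ σ, ∀ c : ℝ, 0 ≤ c → c • a ∈ σ) (x : V) (hx : x ∈ σ) :
    x ∈ intrinsicInterior ℝ {y | y ∈ σ ∧ ∃ z ∈ σ, ∃ c : ℝ, 0 < c ∧ c • x = y + z} := by
  set F : Set V := {y | y ∈ σ ∧ ∃ z ∈ σ, ∃ c : ℝ, 0 < c ∧ c • x = y + z} with hFdef
  have h0σ : (0 : V) ∈ σ := by simpa using hsmul x hx 0 le_rfl
  have hxF : x ∈ F := ⟨hx, 0, h0σ, 1, one_pos, by simp⟩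
  have h0F : (0 : V) ∈ F := ⟨h0σ, x, hx, 1, one_pos, by simp⟩
  have hFadd : ∀ a ∈ F, ∀ b ∈ F, a + b ∈ F := by
    rintro a ⟨haσ, za, hza, ca, hca, ha⟩ b ⟨hbσ, zb, hzb, cb, hcb, hb⟩
    refine ⟨hadd a haσ b hbσ, za + zb, hadd _ hza _ hzb, ca + cb, by positivity, ?_⟩
    rw [add_smul, ha, hb]; abel
  have hFsmul : ∀ a ∈ F, ∀ c : ℝ, 0 ≤ c → c • a ∈ F := by
    rintro a ⟨haσ, za, hza, ca, hca, ha⟩ t ht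
    rcases ht.eq_or_lt with h | h
    · rw [← h, zero_smul]; exact h0F
    · refine ⟨hsmul a haσ t ht, t • za, hsmul _ hza t ht, t * ca, by positivity, ?_⟩
      rw [mul_smul, ha, smul_add]
  have hplus : ∀ a ∈ F, ∀ t : ℝ, 0 ≤ t → x + t • a ∈ F := by
    rintro a ⟨haσ, za, hza, ca, hca, ha⟩ t ht
    refine ⟨hadd x hx _ (hsmul a haσ t ht), t • za, hsmul _ hza t ht, 1 + t * ca,
      by positivity, ?_⟩
    rw [add_smul, one_smul, mul_smul, ha, smul_add]; abel
  have hminus : ∀ a ∈ σ, ∀ za ∈ σ, ∀ ca : ℝ, 0 < ca → ca • x = a + za →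
      ∀ t : ℝ, 0 ≤ t → t * ca ≤ 1 → x - t • a ∈ F := by
    intro a haσ za hza ca hca ha t ht htc
    have hxeq : x = ca⁻¹ • a + ca⁻¹ • za := by
      have h1 : ca⁻¹ • (ca • x) = ca⁻¹ • (a + za) := by rw [ha]
      rw [smul_smul, inv_mul_cancel₀ hca.ne', one_smul, smul_add] at h1
      exact h1
    have htca : t ≤ ca⁻¹ := by
      rw [← one_div]; rw [le_div_iff₀ hca]; exact htc
    refine ⟨?_, t • a, hsmul a haσ t ht, 1, one_pos, by rw [one_smul]; abel⟩
    have h2 : x - t • a = (ca⁻¹ - t) • a + ca⁻¹ • za := by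
      rw [sub_smul]; rw [hxeq]; abel
    rw [h2]
    exact hadd _ (hsmul a haσ _ (by linarith)) _ (hsmul za hza _ (by positivity))
  -- choose an independent spanning subset of F
  obtain ⟨b, hbF, hspan, hli⟩ := exists_linearIndependent ℝ F
  have hbfin : b.Finite := hli.setFinite
  haveI : Fintype b := hbfin.fintype
  have hrange : Set.range (Subtype.val : b → V) = b := Subtype.range_val
  set W : Submodule ℝ V := Submodule.span ℝ (Set.range (Subtype.val : b → V)) with hWdef
  have hWF : W = Submodule.span ℝ F := by rw [hWdef, hrange, hspan]
  have hFW : F ⊆ (W : Set V) := by rw [hWF]; exact Submodule.subset_span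
  have hAW : ∀ y ∈ affineSpan ℝ F, y ∈ W := by
    have hle : affineSpan ℝ F ≤ W.toAffineSubspace :=
      affineSpan_le.2 fun y hy => Submodule.mem_toAffineSubspace.2 (hFW hy)
    exact fun y hy => Submodule.mem_toAffineSubspace.1 (hle hy)
  have hvmem : ∀ v : b, ∃ z ∈ σ, ∃ c : ℝ, 0 < c ∧ c • x = ↑v + z := fun v => (hbF v.2).2
  choose z hzσ c hcpos hceq using hvmem
  have hvσ : ∀ v : b, (v : V) ∈ σ := fun v => (hbF v.2).1
  have hvF : ∀ v : b, (v : V) ∈ F := fun v => hbF v.2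
  set d := Fintype.card b with hd
  set s0 : Finset ℝ := insert 1 (Finset.univ.image fun v : b => 1 / ((d : ℝ) * c v)) with hs0
  have hs0ne : s0.Nonempty := ⟨1, Finset.mem_insert_self _ _⟩
  have hs0pos : ∀ r ∈ s0, 0 < r := by
    intro r hr
    rcases Finset.mem_insert.1 hr with rfl | h
    · norm_num
    · obtain ⟨v, _, hv⟩ := Finset.mem_image.1 h
      have hd0 : 0 < (d : ℝ) := by
        exact_mod_cast Fintype.card_pos_iff.2 ⟨v⟩
      rw [← hv]
      exact div_pos one_pos (mul_pos hd0 (hcpos v))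
  set ε₀ := s0.min' hs0ne with hε₀
  have hε₀pos : 0 < ε₀ := hs0pos _ (s0.min'_mem hs0ne)
  have hε₀le : ∀ v : b, ε₀ ≤ 1 / ((d : ℝ) * c v) := fun v =>
    s0.min'_le _ (Finset.mem_insert_of_mem (Finset.mem_image_of_mem _ (Finset.mem_univ v)))
  let bas : Module.Basis b ℝ ↥W := Module.Basis.span hli
  let G0 : ↥W →ₗ[ℝ] (b → ℝ) := bas.equivFun.toLinearMap
  let G : ↥W →L[ℝ] (b → ℝ) := ⟨G0, G0.continuous_of_finiteDimensional⟩
  set Cn := ‖G‖ with hCn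
  have hCn0 : 0 ≤ Cn := by rw [hCn]; exact norm_nonneg G
  set ε := ε₀ / (Cn + 1) with hε
  have hεpos : 0 < ε := by positivity
  have key : ∀ y ∈ affineSpan ℝ F, ‖y - x‖ < ε → y ∈ F := by
    intro y hy hnorm
    have hyW : y ∈ W := hAW y hy
    have hxW : x ∈ W := hFW hxF
    have hwW : y - x ∈ W := W.sub_mem hyW hxW
    set w : ↥W := ⟨y - x, hwW⟩ with hwdef
    set t : b → ℝ := G w with htdef
    have hwnorm : ‖w‖ = ‖y - x‖ := rfl
    have htle : ∀ v : b, |t v| < ε₀ := by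
      intro v
      have h1 : |t v| ≤ ‖G w‖ := by
        simpa [htdef, Real.norm_eq_abs] using norm_le_pi_norm (G w) v
      have h2 : ‖G w‖ ≤ Cn * ‖w‖ := G.le_opNorm w
      have h3 : Cn * ‖w‖ ≤ Cn * ε := by
        have : ‖w‖ ≤ ε := by rw [hwnorm]; exact hnorm.le
        nlinarith [norm_nonneg w]
      have h4 : Cn * ε < ε₀ := by
        have heq1 : Cn * ε = ε₀ * Cn / (Cn + 1) := by rw [hε]; ring
        rw [heq1, div_lt_iff₀ (by positivity)]
        nlinarith
      linarith
    have hsum : (w : V) = ∑ v : b, t v • (v : V) := by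
      have h := bas.sum_equivFun w
      calc (w : V) = ↑(∑ v : b, bas.equivFun w v • bas v) := by rw [h]
        _ = ∑ v : b, bas.equivFun w v • ((bas v : V)) := by
            push_cast
            rfl
        _ = ∑ v : b, t v • (v : V) := by
            refine Finset.sum_congr rfl fun v _ => ?_
            rw [Module.Basis.span_apply]
            rfl
    have hy_eq : y = x + ∑ v : b, t v • (v : V) := by
      rw [← hsum, hwdef]
      simp
    rcases isEmpty_or_nonempty b with hbe | hbne
    · have hz : (∑ v : b, t v • (v : V)) = 0 := by
        rw [Finset.univ_eq_empty, Finset.sum_empty]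
      rw [hy_eq, hz, add_zero]; exact hxF
    · have hd0 : 0 < d := Fintype.card_pos_iff.2 hbne
      have hdR : (0 : ℝ) < (d : ℝ) := by exact_mod_cast hd0
      have hrep : y = ∑ v : b, (d : ℝ)⁻¹ • (x + ((d : ℝ) * t v) • (v : V)) := by
        have hterm : ∀ v : b, (d : ℝ)⁻¹ • (x + ((d : ℝ) * t v) • (v : V))
            = (d : ℝ)⁻¹ • x + t v • (v : V) := by
          intro v
          rw [smul_add, smul_smul, ← mul_assoc, inv_mul_cancel₀ hdR.ne', one_mul]
        rw [Finset.sum_congr rfl fun v _ => hterm v, Finset.sum_add_distrib,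
          Finset.sum_const, Finset.card_univ, ← hd, hy_eq]
        congr 1
        rw [← Nat.cast_smul_eq_nsmul ℝ d ((d : ℝ)⁻¹ • x), smul_smul,
          mul_inv_cancel₀ hdR.ne', one_smul]
      rw [hrep]
      refine Finset.sum_induction _ (· ∈ F) (fun a b ha hb => hFadd a ha b hb) h0F ?_
      intro v _
      refine hFsmul _ ?_ _ (by positivity)
      rcases le_or_gt 0 (t v) with htv | htv
      · exact hplus _ (hvF v) _ (by positivity)
      · have heq2 : x + ((d : ℝ) * t v) • (v : V) = x - (-((d : ℝ) * t v)) • (v : V) := by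
          rw [neg_smul, sub_neg_eq_add]
        rw [heq2]
        have h5 := htle v
        have h6 : -(t v) < ε₀ := by
          have := abs_lt.1 h5
          linarith [this.1]
        have h7 : ε₀ * ((d : ℝ) * c v) ≤ 1 := by
          have := hε₀le v
          rw [le_div_iff₀ (mul_pos hdR (hcpos v))] at this
          exact this
        have hcv := hcpos v
        refine hminus v (hvσ v) (z v) (hzσ v) (c v) hcv (hceq v) _ (by nlinarith) ?_
        have h8 := mul_lt_mul_of_pos_right h6 (mul_pos hdR hcv)
        nlinarith
  have hxA : x ∈ affineSpan ℝ F := subset_affineSpan ℝ F hxF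
  rw [mem_intrinsicInterior]
  refine ⟨⟨x, hxA⟩, ?_, rfl⟩
  rw [mem_interior]
  refine ⟨Metric.ball ⟨x, hxA⟩ ε, ?_, Metric.isOpen_ball, Metric.mem_ball_self hεpos⟩
  rintro ⟨u, hu⟩ hball
  have hdist : dist u x < ε := by
    have := Metric.mem_ball.1 hball
    rwa [Subtype.dist_eq] at this
  exact key u hu (by rwa [dist_eq_norm] at hdist)

set_option maxHeartbeats 1000000 in
set_option synthInstance.maxHeartbeats 200000 in
/-- For a seminormal finitely generated semigroup `S` with `S - S = M`, the
conductor ideal `I = ⊕_{m + S̄ ⊆ S} k·χ^m` of the normalization `k[S] ⊆ k[S̄]`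
(`S̄ = M ∩ σS`) is a radical ideal; more precisely
`{m ∈ S : m + S̄ ⊆ S} = S \ ⋃_{σ ∈ Δ'} σ`, where `Δ'` is the set of faces `σ` of `σS` with
`(S∩σ) - (S∩σ)` strictly contained in `(M∩σ) - (M∩σ)`. -/
theorem stmt_3 {V : Type} [NormedAddCommGroup V] [NormedSpace ℝ V] [FiniteDimensional ℝ V]
    (k : Type) [Field k]
    (M : AddSubgroup V) (hM : IsLattice M)
    (S : AddSubmonoid V) (hfg : S.FG)
    (hSM : ∀ m : V, m ∈ M ↔ ∃ s ∈ S, ∃ t ∈ S, m = s - t)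
    (σS : Set V) (hσS : σS = coneOf (S : Set V))
    (hsn : ∀ m : V, m ∈ S ↔ ∃ σ : Set V, IsFaceOf σ σS ∧
      m ∈ diffSet (S : Set V) σ ∩ intrinsicInterior ℝ σ) :
    {m : V | m ∈ S ∧ ∀ b ∈ (M : Set V) ∩ σS, m + b ∈ S}
      = (S : Set V) \
        ⋃ σ ∈ {σ : Set V | IsFaceOf σ σS ∧ diffSet (S : Set V) σ ⊂ diffSet (M : Set V) σ}, σ
    ∧ (Ideal.span {x : AddMonoidAlgebra k ↥S | ∃ s : ↥S,
        (∀ b ∈ (M : Set V) ∩ σS, (s : V) + b ∈ S) ∧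
        x = AddMonoidAlgebra.single s 1}).IsRadical := by
  classical
  have hS_sub_M : ∀ v ∈ S, v ∈ M := fun v hv =>
    (hSM v).2 ⟨v, hv, 0, S.zero_mem, (sub_zero v).symm⟩
  have hσadd : ∀ a ∈ σS, ∀ b ∈ σS, a + b ∈ σS := by
    rw [hσS]; exact fun a ha b hb => coneOf_add_mem ha hb
  have hσsmul : ∀ a ∈ σS, ∀ c : ℝ, 0 ≤ c → c • a ∈ σS := by
    rw [hσS]; exact fun a ha c hc => coneOf_smul_mem ha hc
  have hSσ : (S : Set V) ⊆ σS := by rw [hσS]; exact subset_coneOf _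
  set Δ' : Set (Set V) :=
    {σ : Set V | IsFaceOf σ σS ∧ diffSet (S : Set V) σ ⊂ diffSet (M : Set V) σ} with hΔ'
  have part1 : {m : V | m ∈ S ∧ ∀ b ∈ (M : Set V) ∩ σS, m + b ∈ S}
      = (S : Set V) \ ⋃ σ ∈ Δ', σ := by
    ext m
    constructor
    · rintro ⟨hmS, hcond⟩
      refine ⟨hmS, fun hcon => ?_⟩
      obtain ⟨σ, hσΔ, hmσ⟩ := Set.mem_iUnion₂.1 hcon
      obtain ⟨hface, hss⟩ := hσΔ
      obtain ⟨u, huM, huS⟩ := Set.exists_of_ssubset hss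
      obtain ⟨a, ⟨haM, haσ⟩, bb, ⟨hbM, hbσ⟩, rfl⟩ := huM
      apply huS
      exact ⟨m + a, ⟨hcond a ⟨haM, hface.1 haσ⟩, hface.2.2.1 m hmσ a haσ⟩,
        m + bb, ⟨hcond bb ⟨hbM, hface.1 hbσ⟩, hface.2.2.1 m hmσ bb hbσ⟩, by abel⟩
    · rintro ⟨hmS, hnot⟩
      refine ⟨hmS, ?_⟩
      rintro bb ⟨hbM, hbσ⟩
      set x := m + bb with hxdef
      have hmσS : m ∈ σS := hSσ hmS
      have hxσ : x ∈ σS := hσadd m hmσS bb hbσ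
      set F : Set V := {y | y ∈ σS ∧ ∃ z ∈ σS, ∃ c : ℝ, 0 < c ∧ c • x = y + z} with hFdef
      have h0σ : (0 : V) ∈ σS := hSσ S.zero_mem
      have h0F : (0 : V) ∈ F := ⟨h0σ, x, hxσ, 1, one_pos, by simp⟩
      have hxF : x ∈ F := ⟨hxσ, 0, h0σ, 1, one_pos, by simp⟩
      have hmF : m ∈ F := ⟨hmσS, bb, hbσ, 1, one_pos, by rw [one_smul]⟩
      have hFface : IsFaceOf F σS := by
        refine ⟨fun y hy => hy.1, h0F, ?_, ?_, ?_⟩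
        · rintro a ⟨haσ, za, hza, ca, hca, ha⟩ b ⟨hbσ', zb, hzb, cb, hcb, hb⟩
          refine ⟨hσadd a haσ b hbσ', za + zb, hσadd _ hza _ hzb, ca + cb, by positivity, ?_⟩
          rw [add_smul, ha, hb]; abel
        · rintro a ⟨haσ, za, hza, ca, hca, ha⟩ t ht
          rcases ht.eq_or_lt with h | h
          · rw [← h, zero_smul]; exact h0F
          · exact ⟨hσsmul a haσ t ht, t • za, hσsmul _ hza t ht, t * ca, by positivity,
              by rw [mul_smul, ha, smul_add]⟩
        · rintro a haσ b hbσ' ⟨habσ, zz, hzz, cc, hcc, hab⟩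
          constructor
          · exact ⟨haσ, b + zz, hσadd b hbσ' _ hzz, cc, hcc, by rw [hab]; abel⟩
          · exact ⟨hbσ', a + zz, hσadd a haσ _ hzz, cc, hcc, by rw [hab]; abel⟩
      have hFnot : ¬ (diffSet (S : Set V) F ⊂ diffSet (M : Set V) F) := by
        intro hss
        exact hnot (Set.mem_biUnion (show F ∈ Δ' from ⟨hFface, hss⟩) hmF)
      have hsub : diffSet (S : Set V) F ⊆ diffSet (M : Set V) F := by
        rintro u ⟨a, ⟨haS, haF⟩, bb', ⟨hbS, hbF⟩, rfl⟩
        exact ⟨a, ⟨hS_sub_M a haS, haF⟩, bb', ⟨hS_sub_M bb' hbS, hbF⟩, rfl⟩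
      have heqd : diffSet (S : Set V) F = diffSet (M : Set V) F :=
        (Set.eq_or_ssubset_of_subset hsub).resolve_right hFnot
      have hxM : x ∈ M := M.add_mem (hS_sub_M m hmS) hbM
      have hxdM : x ∈ diffSet (M : Set V) F :=
        ⟨x, ⟨hxM, hxF⟩, 0, ⟨M.zero_mem, h0F⟩, (sub_zero x).symm⟩
      have hrel : x ∈ intrinsicInterior ℝ F :=
        mem_intrinsicInterior_genFace σS hσadd hσsmul x hxσ
      exact (hsn x).2 ⟨F, hFface, ⟨heqd ▸ hxdM, hrel⟩⟩
  refine ⟨part1, ?_⟩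
  letI : Module ℚ V := Module.compHom V (algebraMap ℚ ℝ)
  haveI : UniqueSums V := inferInstance
  haveI : UniqueSums ↥S :=
    UniqueSums.of_injective_addHom (S.subtype : ↥S →+ V).toAddHom Subtype.coe_injective ‹_›
  haveI : NoZeroDivisors (AddMonoidAlgebra k ↥S) := inferInstance
  set GenS : Set (AddMonoidAlgebra k ↥S) := {x : AddMonoidAlgebra k ↥S | ∃ s : ↥S,
    (∀ b ∈ (M : Set V) ∩ σS, (s : V) + b ∈ S) ∧
    x = AddMonoidAlgebra.single s 1} with hGen
  set I := Ideal.span GenS with hI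
  have hmemI : ∀ f : AddMonoidAlgebra k ↥S,
      (∀ s ∈ f.coeff.support, ∀ b ∈ (M : Set V) ∩ σS, (s : V) + b ∈ S) → f ∈ I := by
    intro f hf
    have hrepr : f = f.coeff.sum (fun s a => AddMonoidAlgebra.single s a) :=
      (AddMonoidAlgebra.sum_coeff_single f).symm
    rw [hrepr, Finsupp.sum]
    refine Submodule.sum_mem I fun s hs => ?_
    have hgen : AddMonoidAlgebra.single s 1 ∈ I := Ideal.subset_span ⟨s, hf s hs, rfl⟩
    have hfac : AddMonoidAlgebra.single s (f.coeff s)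
        = AddMonoidAlgebra.single (0 : ↥S) (f.coeff s) * AddMonoidAlgebra.single s (1 : k) := by
      rw [AddMonoidAlgebra.single_mul_single, zero_add, mul_one]
    rw [hfac]
    exact I.mul_mem_left _ hgen
  intro y hy
  rw [Ideal.mem_radical_iff] at hy
  obtain ⟨n, hn⟩ := hy
  by_cases hone : (1 : AddMonoidAlgebra k ↥S) ∈ I
  · rw [(Ideal.eq_top_iff_one I).2 hone]; exact Submodule.mem_top
  have hn0 : n ≠ 0 := by rintro rfl; rw [pow_zero] at hn; exact hone hn
  refine hmemI y ?_
  intro s hs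
  by_contra hP
  have hsnotC : (s : V) ∉ {m : V | m ∈ S ∧ ∀ b ∈ (M : Set V) ∩ σS, m + b ∈ S} :=
    fun h => hP h.2
  rw [part1] at hsnotC
  have hsU : (s : V) ∈ ⋃ σ ∈ Δ', σ := by
    by_contra h
    exact hsnotC ⟨s.2, h⟩
  obtain ⟨σ, hσΔ, hsσ⟩ := Set.mem_iUnion₂.1 hsU
  have hface : IsFaceOf σ σS := hσΔ.1
  have hq_add : ∀ a b : ↥S, ((a + b : ↥S) : V) ∈ σ ↔ ((a : ↥S) : V) ∈ σ ∧ ((b : ↥S) : V) ∈ σ := by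
    intro a b
    constructor
    · intro h
      exact hface.2.2.2.2 (a : V) (hSσ a.2) (b : V) (hSσ b.2) (by push_cast at h; exact h)
    · rintro ⟨ha, hb⟩
      push_cast
      exact hface.2.2.1 _ ha _ hb
  set φ : Multiplicative ↥S →* AddMonoidAlgebra k ↥S :=
    { toFun := fun a => if ((Multiplicative.toAdd a : ↥S) : V) ∈ σ
        then AddMonoidAlgebra.single (Multiplicative.toAdd a) 1 else 0,
      map_one' := by
        show (if ((0 : ↥S) : V) ∈ σ then AddMonoidAlgebra.single (0 : ↥S) (1 : k) else 0) = 1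
        have h0 : ((0 : ↥S) : V) ∈ σ := by
          rw [ZeroMemClass.coe_zero]; exact hface.2.1
        rw [if_pos h0]
        exact AddMonoidAlgebra.one_def.symm,
      map_mul' := by
        intro a b
        show (if (((Multiplicative.toAdd a + Multiplicative.toAdd b : ↥S) : V) ∈ σ)
            then AddMonoidAlgebra.single (Multiplicative.toAdd a + Multiplicative.toAdd b) (1:k)
            else 0)
          = (if ((Multiplicative.toAdd a : ↥S) : V) ∈ σ
              then AddMonoidAlgebra.single (Multiplicative.toAdd a) (1:k) else 0)
            * (if ((Multiplicative.toAdd b : ↥S) : V) ∈ σ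
              then AddMonoidAlgebra.single (Multiplicative.toAdd b) (1:k) else 0)
        by_cases ha : ((Multiplicative.toAdd a : ↥S) : V) ∈ σ
        · by_cases hb : ((Multiplicative.toAdd b : ↥S) : V) ∈ σ
          · rw [if_pos ((hq_add _ _).2 ⟨ha, hb⟩), if_pos ha, if_pos hb,
              AddMonoidAlgebra.single_mul_single, mul_one]
          · rw [if_neg (fun h => hb ((hq_add _ _).1 h).2), if_neg hb, mul_zero]
        · rw [if_neg (fun h => ha ((hq_add _ _).1 h).1), if_neg ha, zero_mul] } with hφ
  set π := (AddMonoidAlgebra.lift k (AddMonoidAlgebra k ↥S) ↥S) φ with hπ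
  have hπgen : ∀ g ∈ GenS, π g = 0 := by
    rintro g ⟨s', hPs', rfl⟩
    rw [AddMonoidAlgebra.lift_single, one_smul]
    show (if ((s' : ↥S) : V) ∈ σ then AddMonoidAlgebra.single s' (1:k) else 0) = 0
    rw [if_neg]
    intro hin
    have hmem : (s' : V) ∈ {m : V | m ∈ S ∧ ∀ b ∈ (M : Set V) ∩ σS, m + b ∈ S} := ⟨s'.2, hPs'⟩
    rw [part1] at hmem
    exact hmem.2 (Set.mem_biUnion hσΔ hin)
  have hπI : ∀ f ∈ I, π f = 0 := by
    intro f hf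
    have h1 : π f ∈ Ideal.map π I := Ideal.mem_map_of_mem π hf
    rw [hI, Ideal.map_span] at h1
    have h2 : Ideal.span (π '' GenS) ≤ ⊥ := by
      rw [Ideal.span_le]
      rintro _ ⟨g, hg, rfl⟩
      simp [hπgen g hg]
    simpa using h2 h1
  have hπpow : (π y) ^ n = 0 := by rw [← map_pow]; exact hπI _ hn
  have hπy : π y = 0 := (pow_eq_zero_iff hn0).1 hπpow
  have heval : (π y).coeff s = y.coeff s := by
    rw [hπ, AddMonoidAlgebra.lift_apply, Finsupp.sum, AddMonoidAlgebra.coeff_sum,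
      Finsupp.finset_sum_apply]
    rw [Finset.sum_eq_single s]
    · rw [AddMonoidAlgebra.coeff_smul_apply]
      show y.coeff s • ((if ((s : ↥S) : V) ∈ σ then AddMonoidAlgebra.single s (1:k) else 0).coeff s) = y.coeff s
      rw [if_pos hsσ, AddMonoidAlgebra.coeff_single, Finsupp.single_eq_same, smul_eq_mul, mul_one]
    · intro a _ hne
      rw [AddMonoidAlgebra.coeff_smul_apply]
      show y.coeff a • ((if ((a : ↥S) : V) ∈ σ then AddMonoidAlgebra.single a (1:k) else 0).coeff s) = 0
      by_cases hain : ((a : ↥S) : V) ∈ σ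
      · rw [if_pos hain, AddMonoidAlgebra.coeff_single, Finsupp.single_apply, if_neg hne, smul_zero]
      · rw [if_neg hain, AddMonoidAlgebra.coeff_zero, Finsupp.coe_zero, Pi.zero_apply, smul_zero]
    · intro hns
      rw [Finsupp.notMem_support_iff.1 hns, zero_smul]
      rfl
  rw [hπy] at heval
  exact Finsupp.mem_support_iff.1 hs heval.symm
end

section
/- Let ℳ = (M, Δ, (S_σ)) be a monoidal complex with toric face ring k[ℳ]. Then the sequence 0 → O(X) → ⊕_F O(X_F) → ⊕_{F≠F'} O(X_{F∩F'}) is exact, where the sums run over facets F of Δ; i.e., a collection of regular functions f_F on the irreducible components X_F that pairwise agree on the intersections X_{F∩F'} glues uniquely to a regular function on X = Spec k[ℳ]. -/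
open scoped BigOperators

/-- A monoidal complex `ℳ = (M, Δ, (S_σ)_{σ ∈ Δ})`: a fan `Δ` of polyhedral cones in the
real vector space `V` together with compatible finitely generated semigroups
`S_σ ⊆ M ∩ σ` generating the cones. -/
structure MonoidalComplex (V : Type) [AddCommGroup V] [Module ℝ V] (M : AddSubgroup V) where
  cones : Set (Set V)
  sg : Set V → Set V
  cones_finite : cones.Finite
  face_mem : ∀ σ ∈ cones, ∀ τ : Set V, IsFaceOf τ σ → τ ∈ cones
  inter_face : ∀ σ ∈ cones, ∀ σ' ∈ cones, IsFaceOf (σ ∩ σ') σ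
  sg_sub : ∀ σ ∈ cones, sg σ ⊆ (M : Set V) ∩ σ
  sg_zero : ∀ σ ∈ cones, (0 : V) ∈ sg σ
  sg_add : ∀ σ ∈ cones, ∀ x ∈ sg σ, ∀ y ∈ sg σ, x + y ∈ sg σ
  sg_face : ∀ σ ∈ cones, ∀ τ : Set V, IsFaceOf τ σ → sg τ = sg σ ∩ τ
  sg_gen : ∀ σ ∈ cones, coneOf (sg σ) = σ
  sg_fg : ∀ σ ∈ cones, ∃ t : Finset V, (↑t : Set V) ⊆ sg σ ∧
    sg σ ⊆ (AddSubmonoid.closure (↑t : Set V) : Set V)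

namespace MonoidalComplex

variable {V : Type} [AddCommGroup V] [Module ℝ V] {M : AddSubgroup V}

/-- A facet is a maximal cone of the fan. -/
def IsFacet (𝓜 : MonoidalComplex V M) (F : Set V) : Prop :=
  F ∈ 𝓜.cones ∧ ∀ σ ∈ 𝓜.cones, F ⊆ σ → σ = F

/-- A cone of `Δ` of codimension one. -/
def IsCodimOneCone (𝓜 : MonoidalComplex V M) (τ : Set V) : Prop :=
  τ ∈ 𝓜.cones ∧ ∃ F, 𝓜.IsFacet F ∧ IsCodimOneFace τ F

/-- The fan of `𝓜` is 1-connected: any two distinct facets `F ≠ F'` are joined by a chain of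
facets containing `F ∩ F'`, consecutive members meeting in a common codimension-one face. -/
def OneConnected (𝓜 : MonoidalComplex V M) : Prop :=
  ∀ F F' : Set V, 𝓜.IsFacet F → 𝓜.IsFacet F' → F ≠ F' →
    ∃ (n : ℕ) (c : ℕ → Set V), c 0 = F ∧ c n = F' ∧
      (∀ i ≤ n, 𝓜.IsFacet (c i) ∧ F ∩ F' ⊆ c i) ∧
      ∀ i < n, IsCodimOneFace (c i ∩ c (i + 1)) (c i) ∧
        IsCodimOneFace (c i ∩ c (i + 1)) (c (i + 1))

/-- `X = Spec k[ℳ]` satisfies Serre's condition `S_2`: every collection of functions on the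
irreducible components which is regular in codimension one and compatible along the
invariant codimension-one subvarieties is the restriction of a global regular function. -/
def IsS2 (k : Type) [Field k] (𝓜 : MonoidalComplex V M) : Prop :=
  ∀ f : Set V → (V →₀ k),
    (∀ F, 𝓜.IsFacet F → ∀ m, f F m ≠ 0 → ∃ s ∈ 𝓜.sg F, ∃ t ∈ 𝓜.sg F, m = s - t) →
    (∀ τ, 𝓜.IsCodimOneCone τ → ∀ F, 𝓜.IsFacet F → τ ⊆ F →
      ∀ m, f F m ≠ 0 → ∃ s ∈ 𝓜.sg F, ∃ t ∈ 𝓜.sg τ, m = s - t) →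
    (∀ τ, 𝓜.IsCodimOneCone τ → ∀ F F', 𝓜.IsFacet F → 𝓜.IsFacet F' → τ ⊆ F → τ ⊆ F' →
      ∀ m, (∃ s ∈ 𝓜.sg τ, ∃ t ∈ 𝓜.sg τ, m = s - t) → f F m = f F' m) →
    ∃ g : V →₀ k, (∀ m, g m ≠ 0 → ∃ σ ∈ 𝓜.cones, m ∈ 𝓜.sg σ) ∧
      ∀ F, 𝓜.IsFacet F → ∀ m : V, (m ∈ 𝓜.sg F → f F m = g m) ∧ (m ∉ 𝓜.sg F → f F m = 0)

end MonoidalComplex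

/-- For the toric face ring of a monoidal complex `ℳ`, the sequence
`0 → O(X) → ⊕_F O(X_F) → ⊕_{F ≠ F'} O(X_{F∩F'})` is exact: a collection of regular functions
`f_F` on the irreducible components `X_F` that pairwise agree on the intersections
`X_{F∩F'}` glues uniquely to a regular function on `X = Spec k[ℳ]`. -/
theorem stmt_5 {V : Type} [AddCommGroup V] [Module ℝ V] {M : AddSubgroup V}
    (k : Type) [Field k] (𝓜 : MonoidalComplex V M)
    (f : Set V → (V →₀ k))
    (hsupp : ∀ F, 𝓜.IsFacet F → ∀ m : V, f F m ≠ 0 → m ∈ 𝓜.sg F)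
    (hcompat : ∀ F F', 𝓜.IsFacet F → 𝓜.IsFacet F' → F ≠ F' →
      ∀ m ∈ 𝓜.sg (F ∩ F'), f F m = f F' m) :
    ∃! g : V →₀ k,
      (∀ m : V, g m ≠ 0 → ∃ F, 𝓜.IsFacet F ∧ m ∈ 𝓜.sg F) ∧
      ∀ F, 𝓜.IsFacet F → ∀ m ∈ 𝓜.sg F, g m = f F m := by
  classical
  have key : ∀ F F', 𝓜.IsFacet F → 𝓜.IsFacet F' → ∀ m, m ∈ 𝓜.sg F → m ∈ 𝓜.sg F' →
      f F m = f F' m := by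
    intro F F' hF hF' m hm hm'
    by_cases h : F = F'
    · subst h; rfl
    · apply hcompat F F' hF hF' h
      rw [𝓜.sg_face F hF.1 (F ∩ F') (𝓜.inter_face F hF.1 F' hF'.1)]
      exact ⟨hm, ⟨(𝓜.sg_sub F hF.1 hm).2, (𝓜.sg_sub F' hF'.1 hm').2⟩⟩
  set P : V → Prop := fun m => ∃ F, 𝓜.IsFacet F ∧ m ∈ 𝓜.sg F with hPdef
  let h : V → k := fun m => if hm : P m then f hm.choose m else 0
  have hfin : {F : Set V | 𝓜.IsFacet F}.Finite :=
    𝓜.cones_finite.subset (fun F hF => hF.1)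
  let s : Finset V := hfin.toFinset.biUnion (fun F => (f F).support)
  have hs : ∀ m, h m ≠ 0 → m ∈ s := by
    intro m hm
    simp only [h] at hm
    split_ifs at hm with hPm
    · refine Finset.mem_biUnion.2 ⟨hPm.choose, ?_, Finsupp.mem_support_iff.2 hm⟩
      exact hfin.mem_toFinset.2 hPm.choose_spec.1
    · exact absurd rfl hm
  let g : V →₀ k := Finsupp.onFinset s h hs
  have hg : ∀ m, g m = h m := fun m => rfl
  have hgval : ∀ F, 𝓜.IsFacet F → ∀ m ∈ 𝓜.sg F, g m = f F m := by
    intro F hF m hm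
    have hPm : P m := ⟨F, hF, hm⟩
    rw [hg, show h m = f hPm.choose m from dif_pos hPm]
    exact key hPm.choose F hPm.choose_spec.1 hF m hPm.choose_spec.2 hm
  have hgsupp : ∀ m : V, g m ≠ 0 → ∃ F, 𝓜.IsFacet F ∧ m ∈ 𝓜.sg F := by
    intro m hm
    by_contra hno
    have : h m = 0 := dif_neg hno
    exact hm (by rw [hg, this])
  refine ⟨g, ⟨hgsupp, hgval⟩, ?_⟩
  rintro g' ⟨h1, h2⟩
  ext m
  by_cases hPm : P m
  · obtain ⟨F, hF, hm⟩ := hPm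
    rw [h2 F hF m hm, hgval F hF m hm]
  · have hg'0 : g' m = 0 := by
      by_contra hne; exact hPm (h1 m hne)
    have hg0 : g m = 0 := by rw [hg]; exact dif_neg hPm
    rw [hg'0, hg0]
end
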